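/- Let p be an odd prime and R a commutative ring of characteristic 2. For i = 0,1,2 let Q_i = Q_p(a_i,b_i,c_i) and let A_i be p×p circulant matrices over R, and let M be the 3p×6p block matrix with block rows (Q_0 Q_1 Q_2 | A_0 A_1 A_2), (Q_2 Q_0 Q_1 | A_2 A_0 A_1), (Q_1 Q_2 Q_0 | A_1 A_2 A_0). Suppose the code generated by M is self-dual, in the sense that M·M^T = 0 and there exists a 6p×3p matrix N over R with M·N = I_{3p}. Then there exist p×p matrices B and B' over R such that (Σ_{i=0}^{2} Q_i)·B + (Σ_{i=0}^{2} Q_i)^T·B' = I_p. -/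

import Mathlib

open Matrix
open scoped Classical

/-- The quadratic residue circulant matrix `Q_p(a,b,c)`: the `p × p` matrix over `R`,
indexed by `ZMod p`, whose `(i,j)` entry is `a` if `i = j`, `b` if `j - i` is a
nonzero quadratic residue modulo `p`, and `c` otherwise. -/
noncomputable def Qmat (p : ℕ) {R : Type*} [CommRing R] (a b c : R) :
    Matrix (ZMod p) (ZMod p) R :=
  Matrix.of fun i j => if i = j then a else if IsSquare (j - i) then b else c

/-- The `3×3` block circulant matrix `CIRC(B 0, B 1, B 2)` whose block rows are
`(B 0, B 1, B 2)`, `(B 2, B 0, B 1)`, `(B 1, B 2, B 0)`. -/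
def blockCirc {R n : Type*} (B : ZMod 3 → Matrix n n R) :
    Matrix (ZMod 3 × n) (ZMod 3 × n) R :=
  Matrix.of fun ix jy => B (jy.1 - ix.1) ix.2 jy.2

/-- The `3p × 6p` block matrix with block rows `(Q 0, Q 1, Q 2 | A 0, A 1, A 2)`,
`(Q 2, Q 0, Q 1 | A 2, A 0, A 1)`, `(Q 1, Q 2, Q 0 | A 1, A 2, A 0)`. -/
def Mblk {R n : Type*} (Q A : ZMod 3 → Matrix n n R) :
    Matrix (ZMod 3 × n) ((ZMod 3 × n) ⊕ (ZMod 3 × n)) R :=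
  Matrix.fromCols (blockCirc Q) (blockCirc A)

section Helpers

variable {R : Type*} [CommRing R]

/-- The `n × 3n` repetition matrix. -/
noncomputable def Pmat (R : Type*) (n : Type*) [CommRing R] [DecidableEq n] :
    Matrix n (ZMod 3 × n) R :=
  Matrix.of fun x iy => if x = iy.2 then 1 else 0

lemma Qmat_eq_circulant (p : ℕ) (a b c : R) :
    Qmat p a b c =
      Matrix.circulant (fun d : ZMod p => if d = 0 then a else if IsSquare (-d) then b else c) := by
  ext i j
  simp only [Qmat, Matrix.of_apply, Matrix.circulant_apply]
  rcases eq_or_ne i j with h | h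
  · simp [h]
  · rw [if_neg h, if_neg (sub_ne_zero.mpr h), neg_sub]

lemma Pmat_mul_blockCirc {n : Type*} [Fintype n] [DecidableEq n]
    (G : ZMod 3 → Matrix n n R) :
    Pmat R n * blockCirc G = (∑ m : ZMod 3, G m) * Pmat R n := by
  ext x jy
  obtain ⟨j, y⟩ := jy
  simp only [Matrix.mul_apply, Pmat, blockCirc, Matrix.of_apply, Fintype.sum_prod_type,
    ite_mul, one_mul, zero_mul, mul_ite, mul_one, mul_zero]
  rw [Finset.sum_comm]
  simp only [Finset.sum_ite_eq, Finset.sum_ite_eq', Finset.mem_univ, if_true]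
  rw [Finset.sum_comm]
  simp only [Finset.sum_ite_eq, Finset.mem_univ, if_true]
  rw [Matrix.sum_apply]
  exact Fintype.sum_equiv (Equiv.subLeft j) _ _ (fun i => rfl)

lemma Pmat_mul_transpose {n : Type*} [Fintype n] [DecidableEq n] [CharP R 2] :
    Pmat R n * (Pmat R n)ᵀ = 1 := by
  have h3 : ((3 : ℕ) : R) = 1 := by
    have h2 : ((2 : ℕ) : R) = 0 := CharP.cast_eq_zero R 2
    push_cast
    push_cast at h2
    linear_combination h2
  ext x y
  simp only [Matrix.mul_apply, Matrix.transpose_apply, Pmat, Matrix.of_apply,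
    Fintype.sum_prod_type, ite_mul, one_mul, zero_mul, mul_ite, mul_one, mul_zero]
  simp only [Finset.sum_ite_eq, Finset.mem_univ, if_true]
  rw [Matrix.one_apply]
  rcases eq_or_ne x y with h | h
  · subst h
    simp only [if_pos rfl]
    rw [Finset.sum_const, Finset.card_univ]
    have hcard : Fintype.card (ZMod 3) = 3 := by simp
    rw [hcard]
    rw [nsmul_eq_mul, h3, one_mul]
  · simp [h, Ne.symm h]

end Helpers

theorem stmt9 {R : Type*} [CommRing R] [CharP R 2] (p : ℕ) [Fact (Nat.Prime p)]
    (hodd : Odd p) (a b c : ZMod 3 → R)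
    (A : ZMod 3 → Matrix (ZMod p) (ZMod p) R)
    (hA : ∀ i, ∃ v : ZMod p → R, A i = Matrix.circulant v)
    (hself : Mblk (fun i => Qmat p (a i) (b i) (c i)) A *
      (Mblk (fun i => Qmat p (a i) (b i) (c i)) A)ᵀ = 0)
    (hfull : ∃ N : Matrix ((ZMod 3 × ZMod p) ⊕ (ZMod 3 × ZMod p)) (ZMod 3 × ZMod p) R,
      Mblk (fun i => Qmat p (a i) (b i) (c i)) A * N = 1) :
    ∃ B B' : Matrix (ZMod p) (ZMod p) R,
      (∑ i : ZMod 3, Qmat p (a i) (b i) (c i)) * B +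
        (∑ i : ZMod 3, Qmat p (a i) (b i) (c i))ᵀ * B' = 1 := by
  classical
  obtain ⟨N, hN⟩ := hfull
  set Q : ZMod 3 → Matrix (ZMod p) (ZMod p) R := fun i => Qmat p (a i) (b i) (c i) with hQdef
  -- split N into its two blocks of rows
  set N₁ : Matrix (ZMod 3 × ZMod p) (ZMod 3 × ZMod p) R :=
    Matrix.of fun ku jy => N (Sum.inl ku) jy with hN₁
  set N₂ : Matrix (ZMod 3 × ZMod p) (ZMod 3 × ZMod p) R :=
    Matrix.of fun ku jy => N (Sum.inr ku) jy with hN₂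
  have hNsplit : N = Matrix.fromRows N₁ N₂ := by
    ext w jy; cases w <;> rfl
  have hN' : blockCirc Q * N₁ + blockCirc A * N₂ = 1 := by
    rw [hNsplit, Mblk, Matrix.fromCols_mul_fromRows] at hN
    exact hN
  have hself' : blockCirc Q * (blockCirc Q)ᵀ + blockCirc A * (blockCirc A)ᵀ = 0 := by
    rw [Mblk, Matrix.transpose_fromCols, Matrix.fromCols_mul_fromRows] at hself
    exact hself
  set P : Matrix (ZMod p) (ZMod 3 × ZMod p) R := Pmat R (ZMod p) with hPdef
  set S : Matrix (ZMod p) (ZMod p) R := ∑ m : ZMod 3, Q m with hSdef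
  set T : Matrix (ZMod p) (ZMod p) R := ∑ m : ZMod 3, A m with hTdef
  have hPQ : P * blockCirc Q = S * P := Pmat_mul_blockCirc Q
  have hPA : P * blockCirc A = T * P := Pmat_mul_blockCirc A
  have hPPT : P * Pᵀ = 1 := Pmat_mul_transpose
  -- fold the full-rank equation
  set B : Matrix (ZMod p) (ZMod p) R := P * N₁ * Pᵀ with hBdef
  set C : Matrix (ZMod p) (ZMod p) R := P * N₂ * Pᵀ with hCdef
  have h1 : S * B + T * C = 1 := by
    calc S * B + T * C
        = (S * P) * N₁ * Pᵀ + (T * P) * N₂ * Pᵀ := by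
          rw [hBdef, hCdef]; simp only [Matrix.mul_assoc]
      _ = (P * blockCirc Q) * N₁ * Pᵀ + (P * blockCirc A) * N₂ * Pᵀ := by rw [hPQ, hPA]
      _ = P * (blockCirc Q * N₁ + blockCirc A * N₂) * Pᵀ := by
          simp only [Matrix.mul_add, Matrix.add_mul, Matrix.mul_assoc]
      _ = 1 := by rw [hN', Matrix.mul_one, hPPT]
  -- fold the self-orthogonality equation
  have h2 : S * Sᵀ + T * Tᵀ = 0 := by
    have e1 : P * (blockCirc Q * (blockCirc Q)ᵀ) * Pᵀ = S * Sᵀ := by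
      calc P * (blockCirc Q * (blockCirc Q)ᵀ) * Pᵀ
          = (P * blockCirc Q) * ((P * blockCirc Q))ᵀ := by
            rw [Matrix.transpose_mul]; simp only [Matrix.mul_assoc]
        _ = (S * P) * (S * P)ᵀ := by rw [hPQ]
        _ = S * (P * Pᵀ) * Sᵀ := by rw [Matrix.transpose_mul]; simp only [Matrix.mul_assoc]
        _ = S * Sᵀ := by rw [hPPT, Matrix.mul_one]
    have e2 : P * (blockCirc A * (blockCirc A)ᵀ) * Pᵀ = T * Tᵀ := by
      calc P * (blockCirc A * (blockCirc A)ᵀ) * Pᵀ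
          = (P * blockCirc A) * ((P * blockCirc A))ᵀ := by
            rw [Matrix.transpose_mul]; simp only [Matrix.mul_assoc]
        _ = (T * P) * (T * P)ᵀ := by rw [hPA]
        _ = T * (P * Pᵀ) * Tᵀ := by rw [Matrix.transpose_mul]; simp only [Matrix.mul_assoc]
        _ = T * Tᵀ := by rw [hPPT, Matrix.mul_one]
    calc S * Sᵀ + T * Tᵀ
        = P * (blockCirc Q * (blockCirc Q)ᵀ + blockCirc A * (blockCirc A)ᵀ) * Pᵀ := by
          rw [← e1, ← e2]; simp only [Matrix.mul_add, Matrix.add_mul, Matrix.mul_assoc]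
      _ = 0 := by rw [hself', Matrix.mul_zero, Matrix.zero_mul]
  -- circulant representations of S and T
  set qv : ZMod 3 → (ZMod p → R) := fun m d =>
    if d = 0 then a m else if IsSquare (-d) then b m else c m with hqv
  set s : ZMod p → R := ∑ m : ZMod 3, qv m with hs
  have hS : S = Matrix.circulant s := by
    rw [hSdef]
    have : ∀ m : ZMod 3, Q m = Matrix.circulant (qv m) := by
      intro m
      ext i j
      simp only [hQdef, hqv, Qmat, Matrix.of_apply, Matrix.circulant_apply]
      rcases eq_or_ne i j with h | h
      · simp [h]
      · rw [if_neg h, if_neg (sub_ne_zero.mpr h), neg_sub]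
        congr
    simp only [this]
    ext i j
    simp [Matrix.circulant_apply, Matrix.sum_apply, hs, Finset.sum_apply]
  choose v hv using hA
  set t : ZMod p → R := ∑ m : ZMod 3, v m with ht
  have hT : T = Matrix.circulant t := by
    rw [hTdef]
    simp only [fun m => hv m]
    ext i j
    simp [Matrix.circulant_apply, Matrix.sum_apply, ht, Finset.sum_apply]
  -- upgrade B, C to circulant matrices using column 0
  set β : ZMod p → R := fun u => B u 0 with hβ
  set γ : ZMod p → R := fun u => C u 0 with hγ
  have hone : Matrix.circulant (fun d : ZMod p => if d = 0 then (1 : R) else 0) = 1 := by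
    ext i j
    simp [Matrix.circulant_apply, Matrix.one_apply, sub_eq_zero]
  have hup : Matrix.circulant s * Matrix.circulant β
      + Matrix.circulant t * Matrix.circulant γ = 1 := by
    rw [Matrix.circulant_mul, Matrix.circulant_mul, ← Matrix.circulant_add]
    have hvec : Matrix.circulant s *ᵥ β + Matrix.circulant t *ᵥ γ
        = fun d : ZMod p => if d = 0 then (1 : R) else 0 := by
      funext x
      have e1 : (Matrix.circulant s *ᵥ β + Matrix.circulant t *ᵥ γ) x
          = (S * B + T * C) x 0 := by
        simp only [Pi.add_apply, Matrix.mulVec, dotProduct, Matrix.add_apply,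
          Matrix.mul_apply, hS, hT, hβ, hγ]
      rw [e1, h1, Matrix.one_apply]
    rw [hvec, hone]
  -- self-orthogonality in circulant form, char 2
  have hTT : Matrix.circulant t * (Matrix.circulant t)ᵀ
      = Matrix.circulant s * (Matrix.circulant s)ᵀ := by
    have h2' : T * Tᵀ = -(S * Sᵀ) := eq_neg_of_add_eq_zero_right h2
    have hneg : -(S * Sᵀ) = S * Sᵀ := by
      ext i j; simp [Matrix.neg_apply, CharTwo.neg_eq]
    rw [← hS, ← hT, h2', hneg]
  -- main algebra
  set s' : ZMod p → R := fun i => s (-i) with hs'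
  set t' : ZMod p → R := fun i => t (-i) with ht'
  have hSt : (Matrix.circulant s)ᵀ = Matrix.circulant s' := by
    rw [hs']; exact Matrix.transpose_circulant s
  have hTt : (Matrix.circulant t)ᵀ = Matrix.circulant t' := by
    rw [ht']; exact Matrix.transpose_circulant t
  have key : Matrix.circulant t'
      = Matrix.circulant s *
        (Matrix.circulant t' * Matrix.circulant β + Matrix.circulant s' * Matrix.circulant γ) := by
    have h := congrArg (fun X => Matrix.circulant t' * X) hup
    simp only [mul_one, mul_add] at h
    calc Matrix.circulant t'
        = Matrix.circulant t' * (Matrix.circulant s * Matrix.circulant β)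
          + Matrix.circulant t' * (Matrix.circulant t * Matrix.circulant γ) := h.symm
      _ = Matrix.circulant s * (Matrix.circulant t' * Matrix.circulant β)
          + (Matrix.circulant t' * Matrix.circulant t) * Matrix.circulant γ := by
            rw [← mul_assoc, Matrix.circulant_mul_comm t' s, mul_assoc,
              ← mul_assoc (Matrix.circulant t') (Matrix.circulant t) (Matrix.circulant γ)]
      _ = Matrix.circulant s * (Matrix.circulant t' * Matrix.circulant β)
          + (Matrix.circulant s * Matrix.circulant s') * Matrix.circulant γ := by
            rw [Matrix.circulant_mul_comm t' t, ← hTt, hTT, hSt]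
      _ = Matrix.circulant s *
          (Matrix.circulant t' * Matrix.circulant β + Matrix.circulant s' * Matrix.circulant γ) := by
            rw [mul_add, mul_assoc]
  -- Z is circulant
  set z : ZMod p → R := Matrix.circulant t' *ᵥ β + Matrix.circulant s' *ᵥ γ with hz
  have hZ : Matrix.circulant t' * Matrix.circulant β + Matrix.circulant s' * Matrix.circulant γ
      = Matrix.circulant z := by
    rw [Matrix.circulant_mul, Matrix.circulant_mul, ← Matrix.circulant_add]
  rw [hZ] at key
  -- transpose of key : circulant t = circulant z' * circulant s'
  have keyT := congrArg Matrix.transpose key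
  rw [Matrix.transpose_mul, Matrix.transpose_circulant, Matrix.transpose_circulant,
    Matrix.transpose_circulant] at keyT
  have ht'' : (fun i => t' (-i)) = t := by funext i; simp [ht']
  rw [ht''] at keyT
  -- keyT : circulant t = circulant (fun i => z (-i)) * circulant (fun i => s (-i))
  refine ⟨Matrix.circulant β, Matrix.circulant (fun i => z (-i)) * Matrix.circulant γ, ?_⟩
  rw [hS, Matrix.transpose_circulant]
  calc Matrix.circulant s * Matrix.circulant β
        + Matrix.circulant (fun i => s (-i)) *
          (Matrix.circulant (fun i => z (-i)) * Matrix.circulant γ)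
      = Matrix.circulant s * Matrix.circulant β
        + (Matrix.circulant (fun i => z (-i)) * Matrix.circulant (fun i => s (-i)))
          * Matrix.circulant γ := by
        rw [← Matrix.mul_assoc,
          Matrix.circulant_mul_comm (fun i => s (-i)) (fun i => z (-i))]
    _ = Matrix.circulant s * Matrix.circulant β + Matrix.circulant t * Matrix.circulant γ := by
        rw [← keyT]
    _ = 1 := hup
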